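/- Let M' and M'' be two mixed trees with the same underlying graph (a tree). Then one of them can be obtained from the other by a three-way switching: there exists a diagonal matrix D with diagonal entries in {ω^i : 0 ≤ i ≤ 5} such that N(M'') = D^{-1} N(M') D. -/

import Mathlib

open Complex Finset

noncomputable section

/-- The primitive sixth root of unity `ω = 1/2 + (√3/2)i`. -/
def omega6 : ℂ := ⟨1/2, Real.sqrt 3 / 2⟩

/-- A loopless undirected multigraph with vertex type `V` and edge type `E`:
each edge has a pair of distinct endpoints. -/
structure Multigraph (V E : Type) where
  ends : E → Sym2 V
  loopless : ∀ e, ¬ (ends e).IsDiag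

variable {V E : Type}

/-- A mixed multigraph with underlying multigraph `G`: each edge is either
unoriented (`none`) or oriented (`some (u, v)`, an arc from `u` to `v`),
the orientation is compatible with the endpoints, and there are no digons
(two parallel edges oriented in opposite directions). -/
structure MixedOrientation (G : Multigraph V E) where
  orient : E → Option (V × V)
  compat : ∀ e a b, orient e = some (a, b) → G.ends e = s(a, b)
  noDigon : ∀ e f a b, G.ends e = G.ends f → orient e = some (a, b) → orient f ≠ some (b, a)

/-- The underlying graph of `G`, viewed as the mixed multigraph with no oriented edges. -/
def Multigraph.triv (G : Multigraph V E) : MixedOrientation G where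
  orient := fun _ => none
  compat := fun _ _ _ h => by simp at h
  noDigon := fun _ _ _ _ _ h => by simp at h

variable [DecidableEq V]

/-- The contribution of edge `e`, traversed from `u` to `v`, to the Hermitian adjacency
matrix entry `N_{uv}` and to walk weights: `1` if `e` is unoriented, `ω` if `e` is an arc
from `u` to `v`, and `conj ω` if `e` is an arc from `v` to `u`. -/
def stepWeight {G : Multigraph V E} (M : MixedOrientation G) (e : E) (u v : V) : ℂ :=
  match M.orient e with
  | none => 1
  | some (a, _) => if a = u then omega6 else (starRingEnd ℂ) omega6

/-- The Hermitian adjacency matrix `N(M)` of a mixed multigraph: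
`N_{uv} = e{u,v} + e(u,v)·ω + e(v,u)·conj ω`. -/
def herm [Fintype V] [Fintype E] {G : Multigraph V E} (M : MixedOrientation G) :
    Matrix V V ℂ :=
  Matrix.of fun u v => ∑ e : E, if G.ends e = s(u, v) then stepWeight M e u v else 0

/-- A (mixed) cycle in the multigraph `G`: a cyclic sequence of `n ≥ 2` distinct vertices
joined by `n` distinct edges. -/
structure MixedCycle (G : Multigraph V E) where
  n : ℕ
  two_le : 2 ≤ n
  vert : ZMod n → V
  edge : ZMod n → E
  vert_inj : Function.Injective vert
  edge_inj : Function.Injective edge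
  ends_eq : ∀ i, G.ends (edge i) = s(vert i, vert (i + 1))

/-- The weight `wt(C) = ω^f · (conj ω)^b` of a mixed cycle `C` in `M`, traversed in
the direction given by its parametrization. -/
def cycleWeight {G : Multigraph V E} (M : MixedOrientation G) (C : MixedCycle G) : ℂ :=
  haveI : NeZero C.n := ⟨by have := C.two_le; omega⟩
  ∏ i : ZMod C.n, stepWeight M (C.edge i) (C.vert i) (C.vert (i + 1))

/-- The value `ν(C) = wt(C) + conj (wt(C))` of a mixed cycle. -/
def nu {G : Multigraph V E} (M : MixedOrientation G) (C : MixedCycle G) : ℂ :=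
  cycleWeight M C + (starRingEnd ℂ) (cycleWeight M C)

/-- The number of forward arcs of a mixed cycle (relative to its direction). -/
def fCount {G : Multigraph V E} (M : MixedOrientation G) (C : MixedCycle G) : ℕ :=
  haveI : NeZero C.n := ⟨by have := C.two_le; omega⟩
  (Finset.univ.filter fun i : ZMod C.n =>
    M.orient (C.edge i) = some (C.vert i, C.vert (i + 1))).card

/-- The number of backward arcs of a mixed cycle (relative to its direction). -/
def bCount {G : Multigraph V E} (M : MixedOrientation G) (C : MixedCycle G) : ℕ :=
  haveI : NeZero C.n := ⟨by have := C.two_le; omega⟩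
  (Finset.univ.filter fun i : ZMod C.n =>
    M.orient (C.edge i) = some (C.vert (i + 1), C.vert i)).card

/-- The edge set of a mixed cycle. -/
def cycleEdges [DecidableEq E] {G : Multigraph V E} (C : MixedCycle G) : Finset E :=
  haveI : NeZero C.n := ⟨by have := C.two_le; omega⟩
  Finset.image C.edge Finset.univ

/-- Reachability in `G` using only edges from the set `S`. -/
def ReachIn (G : Multigraph V E) (S : Set E) (u v : V) : Prop :=
  Relation.ReflTransGen (fun x y => ∃ e ∈ S, G.ends e = s(x, y)) u v

/-- A multigraph is connected if every two vertices are joined by a walk. -/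
def Multigraph.Connected (G : Multigraph V E) : Prop :=
  ∀ u v : V, ReachIn G Set.univ u v

/-- All entries of the diagonal `d` are sixth roots of unity `ω^i`, `0 ≤ i ≤ 5`. -/
def IsSixthRoots (d : V → ℂ) : Prop := ∀ v, ∃ i : ℕ, i ≤ 5 ∧ d v = omega6 ^ i

/-- `M''` is obtained from `M'` by a three-way switching: `N(M'') = D⁻¹ N(M') D` for
some diagonal matrix `D` whose diagonal entries are sixth roots of unity. -/
def Switching [Fintype V] [Fintype E] {G : Multigraph V E}
    (M' M'' : MixedOrientation G) : Prop :=
  ∃ d : V → ℂ, IsSixthRoots d ∧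
    herm M'' = (Matrix.diagonal d)⁻¹ * herm M' * Matrix.diagonal d

/-- `M'` is the converse of `M`: every arc of `M` is reversed. -/
def IsConverse {G : Multigraph V E} (M M' : MixedOrientation G) : Prop :=
  ∀ e, M'.orient e = Option.map Prod.swap (M.orient e)

/-- `M'` and `M''` are switching equivalent: one is obtained from the other by a
three-way switching and/or taking a converse. -/
def SwitchEquiv [Fintype V] [Fintype E] {G : Multigraph V E}
    (M' M'' : MixedOrientation G) : Prop :=
  Switching M' M'' ∨ ∃ Mc : MixedOrientation G, IsConverse M' Mc ∧ Switching Mc M''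

/-- `T` is (the edge set of) a spanning tree of `G`: it connects all vertices and
contains no cycle. -/
def IsSpanningTree (G : Multigraph V E) (T : Set E) : Prop :=
  (∀ u v : V, ReachIn G T u v) ∧ ∀ C : MixedCycle G, ¬ (∀ i, C.edge i ∈ T)

/-- `C` is a fundamental cycle with respect to the spanning tree `T`: it uses exactly
one non-tree edge. -/
def IsFundamentalCycle (G : Multigraph V E) (T : Set E) (C : MixedCycle G) : Prop :=
  ∃ e, e ∉ T ∧ ∀ i, C.edge i = e ∨ C.edge i ∈ T


/-! ### Auxiliary development -/

section OmegaFacts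

lemma omega_mul_conj : omega6 * (starRingEnd ℂ) omega6 = 1 := by
  have h3 : Real.sqrt 3 * Real.sqrt 3 = 3 := Real.mul_self_sqrt (by norm_num)
  simp [omega6, Complex.ext_iff, Complex.mul_re, Complex.mul_im]
  constructor
  · linear_combination (1/4 : ℝ) * h3
  · ring

lemma omega_pow_three : omega6 ^ 3 = -1 := by
  have h3 : Real.sqrt 3 * Real.sqrt 3 = 3 := Real.mul_self_sqrt (by norm_num)
  simp [omega6, Complex.ext_iff, pow_succ, Complex.mul_re, Complex.mul_im]
  constructor
  · linear_combination (-3/8 : ℝ) * h3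
  · linear_combination (-Real.sqrt 3/8) * h3

lemma omega_pow_six : omega6 ^ 6 = 1 := by
  have : omega6 ^ 6 = (omega6 ^ 3) ^ 2 := by ring
  rw [this, omega_pow_three]; ring

lemma omega_ne_zero : omega6 ≠ 0 := by
  intro h
  have := omega_mul_conj
  rw [h] at this; simp at this

lemma conj_omega : (starRingEnd ℂ) omega6 = omega6 ^ 5 := by
  apply mul_right_cancel₀ omega_ne_zero
  rw [mul_comm ((starRingEnd ℂ) omega6), omega_mul_conj, ← pow_succ, omega_pow_six]

/-- `ω` to the power of an exponent in `ZMod 6`. -/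
def pw (k : ZMod 6) : ℂ := omega6 ^ k.val

lemma pw_natCast (a : ℕ) : pw (a : ZMod 6) = omega6 ^ a := by
  rw [pw, ZMod.val_natCast]
  conv_rhs => rw [← Nat.div_add_mod a 6]
  rw [pow_add, pow_mul, omega_pow_six, one_pow, one_mul]

lemma pw_add (a b : ZMod 6) : pw (a + b) = pw a * pw b := by
  have : ((a.val + b.val : ℕ) : ZMod 6) = a + b := by
    push_cast [ZMod.natCast_val]; simp [ZMod.cast_id]
  rw [← this, pw_natCast, pow_add, pw, pw]

lemma pw_zero : pw 0 = 1 := by simp [pw, ZMod.val_zero]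

lemma pw_ne_zero (a : ZMod 6) : pw a ≠ 0 := pow_ne_zero _ omega_ne_zero

lemma pw_inv (a : ZMod 6) : (pw a)⁻¹ = pw (-a) := by
  refine inv_eq_of_mul_eq_one_right ?_
  rw [← pw_add, add_neg_cancel, pw_zero]

lemma pw_one : pw 1 = omega6 := by
  have : ((1:ℕ) : ZMod 6) = 1 := by norm_num
  rw [← this, pw_natCast, pow_one]

lemma pw_neg_one : pw (-1) = (starRingEnd ℂ) omega6 := by
  have : (-1 : ZMod 6) = ((5:ℕ) : ZMod 6) := by decide
  rw [this, pw_natCast, conj_omega]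

end OmegaFacts

section Walks

variable {G : Multigraph V E}

/-- Walk predicate: `WalkP G u p v` means `p` is a list of (edge, next-vertex)
steps forming a walk from `u` to `v`. -/
def WalkP (G : Multigraph V E) : V → List (E × V) → V → Prop
  | u, [], v => u = v
  | u, (e, w) :: p, v => G.ends e = s(u, w) ∧ WalkP G w p v

lemma walkP_append {u w v : V} {p q : List (E × V)} (hp : WalkP G u p w)
    (hq : WalkP G w q v) : WalkP G u (p ++ q) v := by
  induction p generalizing u with
  | nil => cases hp; exact hq
  | cons a p ih =>
    obtain ⟨e, x⟩ := a
    obtain ⟨h1, h2⟩ := hp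
    exact ⟨h1, ih h2⟩

lemma reach_iff_walk {S : Set E} {u v : V} :
    ReachIn G S u v ↔ ∃ p : List (E × V), WalkP G u p v ∧ ∀ x ∈ p, x.1 ∈ S := by
  constructor
  · intro h
    induction h with
    | refl => exact ⟨[], rfl, by simp⟩
    | @tail x y _ hstep ih =>
      obtain ⟨p, hp, hps⟩ := ih
      obtain ⟨e, heS, he⟩ := hstep
      refine ⟨p ++ [(e, y)], walkP_append hp ⟨he, rfl⟩, ?_⟩
      intro a ha
      rcases List.mem_append.mp ha with h | h
      · exact hps a h
      · simp at h; subst h; exact heS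
  · rintro ⟨p, hp, hps⟩
    induction p generalizing u with
    | nil => cases hp; exact .refl
    | cons a p ih =>
      obtain ⟨e, w⟩ := a
      obtain ⟨h1, h2⟩ := hp
      exact .head ⟨e, hps (e, w) List.mem_cons_self, h1⟩
        (ih h2 fun x hx => hps x (List.mem_cons_of_mem _ hx))

lemma reachIn_symm {S : Set E} {u v : V} (h : ReachIn G S u v) : ReachIn G S v u := by
  induction h with
  | refl => exact .refl
  | @tail x y _ hstep ih =>
    obtain ⟨e, heS, he⟩ := hstep
    exact (Relation.ReflTransGen.single ⟨e, heS, he.trans (Sym2.eq_swap)⟩).trans ih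

lemma ends_injective (hacyclic : IsEmpty (MixedCycle G)) : Function.Injective G.ends := by
  intro e f hef
  by_contra hne
  obtain ⟨u, v, huv⟩ : ∃ u v : V, G.ends e = s(u, v) :=
    Sym2.inductionOn (f := fun z => G.ends e = z → ∃ u v : V, z = s(u, v)) (G.ends e)
      (fun a b _ => ⟨a, b, rfl⟩) rfl
  have hne' : u ≠ v := by
    intro h
    exact G.loopless e (by rw [huv, h]; simp)
  have h2 : ∀ i : ZMod 2, i = 0 ∨ i = 1 := by decide
  refine hacyclic.false ⟨2, le_refl 2, fun i => if i = 0 then u else v,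
    fun i => if i = 0 then e else f, ?_, ?_, ?_⟩
  · intro i j hij
    rcases h2 i with rfl | rfl <;> rcases h2 j with rfl | rfl <;> simp_all
  · intro i j hij
    rcases h2 i with rfl | rfl <;> rcases h2 j with rfl | rfl <;> simp_all
  · intro i
    rcases h2 i with rfl | rfl
    · simpa using huv
    · simpa using (hef ▸ huv).trans Sym2.eq_swap

lemma walkP_tail {x v u : V} {q : List (E × V)} (h : WalkP G x q v)
    (hu : u ∈ x :: q.map Prod.snd) :
    ∃ q', (∀ a ∈ q', a ∈ q) ∧ WalkP G u q' v ∧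
      (u :: q'.map Prod.snd) <:+ (x :: q.map Prod.snd) := by
  induction q generalizing x with
  | nil =>
    simp only [List.map_nil, List.mem_singleton] at hu
    subst hu
    exact ⟨[], by simp, h, by simp⟩
  | cons a q ih =>
    obtain ⟨e, w⟩ := a
    obtain ⟨h1, h2⟩ := h
    rcases eq_or_ne u x with rfl | hux
    · exact ⟨(e, w) :: q, fun _ h => h, ⟨h1, h2⟩, List.suffix_refl _⟩
    · have hu' : u ∈ w :: q.map Prod.snd := by
        rcases List.mem_cons.mp hu with h | h
        · exact absurd h hux
        · simpa using h
      obtain ⟨q', hsub, hw, hsuf⟩ := ih h2 hu'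
      exact ⟨q', fun a ha => List.mem_cons_of_mem _ (hsub a ha), hw,
        hsuf.trans (by simpa using List.suffix_cons x (w :: q.map Prod.snd))⟩

lemma walkP_simplify {u v : V} {p : List (E × V)} (h : WalkP G u p v) :
    ∃ q, (∀ a ∈ q, a ∈ p) ∧ WalkP G u q v ∧ (u :: q.map Prod.snd).Nodup := by
  induction p generalizing u with
  | nil => exact ⟨[], by simp, h, by simp⟩
  | cons a p ih =>
    obtain ⟨e, w⟩ := a
    obtain ⟨h1, h2⟩ := h
    obtain ⟨q', hsub, hw, hnd⟩ := ih h2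
    by_cases hu : u ∈ w :: q'.map Prod.snd
    · obtain ⟨q'', hsub'', hw'', hsuf⟩ := walkP_tail hw hu
      exact ⟨q'', fun a ha => List.mem_cons_of_mem _ (hsub a (hsub'' a ha)), hw'',
        hnd.sublist hsuf.sublist⟩
    · refine ⟨(e, w) :: q', ?_, ⟨h1, hw⟩, ?_⟩
      · intro a ha
        rcases List.mem_cons.mp ha with rfl | ha
        · simp
        · exact List.mem_cons_of_mem _ (hsub a ha)
      · simpa [hu] using hnd

lemma walkP_ends {u v : V} {q : List (E × V)} (h : WalkP G u q v) (i : ℕ) (hi : i < q.length) :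
    G.ends (q[i].1) =
      s((u :: q.map Prod.snd)[i]'(by simp; omega),
        (u :: q.map Prod.snd)[i + 1]'(by simp; omega)) := by
  induction q generalizing u i with
  | nil => simp at hi
  | cons a q ih =>
    obtain ⟨e, w⟩ := a
    obtain ⟨h1, h2⟩ := h
    cases i with
    | zero =>
      cases q with
      | nil => simpa using h1
      | cons b q => simpa using h1
    | succ i =>
      have hi' : i < q.length := by simpa using Nat.lt_of_succ_lt_succ hi
      have := ih h2 i hi'
      simpa using this

lemma walkP_last {u v : V} {q : List (E × V)} (h : WalkP G u q v) :
    (u :: q.map Prod.snd)[q.length]'(by simp) = v := by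
  induction q generalizing u with
  | nil => simpa [WalkP] using h
  | cons a q ih =>
    obtain ⟨e, w⟩ := a
    obtain ⟨h1, h2⟩ := h
    simpa using ih h2

lemma separation (hacyclic : IsEmpty (MixedCycle G)) {e : E} {u v : V}
    (h : G.ends e = s(u, v)) : ¬ ReachIn G {e}ᶜ u v := by
  have hinj := ends_injective hacyclic
  have huv : u ≠ v := by
    intro h'
    exact G.loopless e (by rw [h, h']; simp)
  intro hr
  obtain ⟨p, hp, hps⟩ := reach_iff_walk.mp hr
  obtain ⟨q, hsub, hw, hnd⟩ := walkP_simplify hp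
  have hqe : ∀ a ∈ q, a.1 ≠ e := fun a ha => hps a (hsub a ha)
  -- `q` is nonempty
  cases q with
  | nil => exact huv hw
  | cons a0 q0 =>
  rcases q0 with _ | ⟨a1, q1⟩
  · -- single edge walk: its edge has the same ends as `e`, contradiction
    obtain ⟨e0, w⟩ := a0
    obtain ⟨h1, h2⟩ := hw
    obtain rfl : w = v := h2
    exact hqe (e0, w) (by simp) (hinj (h1.trans h.symm))
  · -- walk of length at least 2: build a cycle
    set q : List (E × V) := a0 :: a1 :: q1 with hq
    have hq2 : 2 ≤ q.length := by simp [hq]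
    clear_value q
    refine hacyclic.false ?_
    set vs : List V := u :: q.map Prod.snd with hvs
    set es : List E := q.map Prod.fst ++ [e] with hes
    have hvsl : vs.length = q.length + 1 := by simp [hvs]
    have hesl : es.length = q.length + 1 := by simp [hes]
    set n := q.length + 1 with hn
    haveI : NeZero n := ⟨by omega⟩
    haveI : Fact (1 < n) := ⟨by omega⟩
    have h1n : (1 : ZMod n).val = 1 := ZMod.val_one n
    set vert : ZMod n → V := fun i => vs[i.val]'(by rw [hvsl]; exact ZMod.val_lt i)
      with hvert
    set edge : ZMod n → E := fun i => es[i.val]'(by rw [hesl]; exact ZMod.val_lt i)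
      with hedge
    have hvinj : Function.Injective vert := by
      intro i j hij
      have hg : vs.get ⟨i.val, by rw [hvsl]; exact ZMod.val_lt i⟩
          = vs.get ⟨j.val, by rw [hvsl]; exact ZMod.val_lt j⟩ := by
        simpa [List.get_eq_getElem] using hij
      have := List.nodup_iff_injective_get.mp hnd hg
      exact ZMod.val_injective n (by simpa using congrArg Fin.val this)
    have hlastv : vert ((q.length : ℕ) : ZMod n) = v := by
      have hq : ((q.length : ℕ) : ZMod n).val = q.length := ZMod.val_cast_of_lt (by omega)
      have := walkP_last hw
      rw [hvert]
      simp only [hq]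
      exact this
    have hends : ∀ i : ZMod n, G.ends (edge i) = s(vert i, vert (i + 1)) := by
      intro i
      rcases lt_or_ge (i.val + 1) n with hlt | hge
      · have hadd : (i + 1).val = i.val + 1 := by
          have := ZMod.val_add_of_lt (n := n) (a := i) (b := 1) (by rw [h1n]; exact hlt)
          rw [this, h1n]
        have hi : i.val < q.length := by omega
        have hei : edge i = (q[i.val]'hi).1 := by
          rw [hedge]
          simp only [hes]
          rw [List.getElem_append_left (by simpa using hi)]
          simp
        rw [hei, walkP_ends hw i.val hi, hvert]
        simp only [hadd]
        rfl
      · have hi : i.val = q.length := by have := ZMod.val_lt i; omega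
        have hi1 : (i + 1).val = 0 := by
          have hz : i + 1 = 0 := by
            have hcast : ((i.val : ℕ) : ZMod n) = i := ZMod.natCast_zmod_val i
            rw [← hcast, hi, ← Nat.cast_one, ← Nat.cast_add, hn, ZMod.natCast_self]
          rw [hz, ZMod.val_zero]
        have hei : edge i = e := by
          rw [hedge]
          simp only [hes, hi]
          rw [List.getElem_append_right (by simp)]
          simp
        have hv1 : vert i = v := by rw [← hlastv, hvert]; simp only []; congr 1
          <;> rw [hi, ZMod.val_cast_of_lt (by omega)]
        have hv0 : vert (i + 1) = u := by rw [hvert]; simp only [hi1]; simp [hvs]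
        rw [hei, hv1, hv0]
        exact h.trans Sym2.eq_swap
    have heinj : Function.Injective edge := by
      intro i j hij
      have hsy : s(vert i, vert (i + 1)) = s(vert j, vert (j + 1)) := by
        rw [← hends i, ← hends j, hij]
      rcases Sym2.eq_iff.mp hsy with ⟨h1, _⟩ | ⟨ha, hb⟩
      · exact hvinj h1
      · have hij1 : i = j + 1 := hvinj ha
        have hij2 : i + 1 = j := hvinj hb
        have hii : i = i + 2 := by
          calc i = j + 1 := hij1
            _ = (i + 1) + 1 := by rw [hij2]
            _ = i + 2 := by ring
        have h20 : ((2 : ℕ) : ZMod n) = 0 := by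
          have := left_eq_add.mp hii
          rw [← this]; norm_cast
        have hdvd : n ∣ 2 := (ZMod.natCast_eq_zero_iff 2 n).mp h20
        have := Nat.le_of_dvd (by norm_num) hdvd
        omega
    exact ⟨n, by omega, vert, edge, hvinj, heinj, hends⟩

end Walks


section Potential

variable {G : Multigraph V E}

/-- Exponent (in `ZMod 6`) of the step weight. -/
def expo (o : Option (V × V)) (u : V) : ZMod 6 :=
  match o with
  | none => 0
  | some (a, _) => if a = u then 1 else -1

lemma stepWeight_eq (M : MixedOrientation G) (e : E) (u v : V) :
    stepWeight M e u v = pw (expo (M.orient e) u) := by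
  cases ho : M.orient e with
  | none => simp [stepWeight, expo, ho, pw_zero]
  | some ab =>
    obtain ⟨a, b⟩ := ab
    by_cases hau : a = u <;> simp [stepWeight, expo, ho, hau, pw_one, pw_neg_one]

lemma expo_symm (M : MixedOrientation G) {e : E} {u v : V} (he : G.ends e = s(u, v))
    (huv : u ≠ v) : expo (M.orient e) v = - expo (M.orient e) u := by
  cases ho : M.orient e with
  | none => simp [expo]
  | some ab =>
    obtain ⟨a, b⟩ := ab
    have hc := M.compat e a b ho
    rw [he] at hc
    rcases Sym2.eq_iff.mp hc with ⟨h1, h2⟩ | ⟨h1, h2⟩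
    · subst h1
      simp [expo, huv]
    · subst h1
      subst h2
      simp [expo, Ne.symm huv]

lemma sym2_exists_rep (z : Sym2 V) : ∃ p : V × V, z = s(p.1, p.2) :=
  Sym2.inductionOn z fun a b => ⟨(a, b), rfl⟩

/-- A choice of ordered endpoints for each edge. -/
noncomputable def endsP (G : Multigraph V E) (e : E) : V × V :=
  Classical.choose (sym2_exists_rep (G.ends e))

lemma endsP_spec (G : Multigraph V E) (e : E) :
    G.ends e = s((endsP G e).1, (endsP G e).2) :=
  Classical.choose_spec (sym2_exists_rep (G.ends e))

open Classical in
/-- Contribution of edge `e` to the switching potential at `v`. -/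
noncomputable def contrib (M' M'' : MixedOrientation G) (e : E) (v : V) : ZMod 6 :=
  if ReachIn G {e}ᶜ (endsP G e).1 v then 0
  else expo (M''.orient e) (endsP G e).1 - expo (M'.orient e) (endsP G e).1

/-- The switching potential. -/
noncomputable def potential [Fintype E] (M' M'' : MixedOrientation G) (v : V) : ZMod 6 :=
  ∑ e : E, contrib M' M'' e v

lemma potential_diff [Fintype E] (hacyclic : IsEmpty (MixedCycle G))
    (M' M'' : MixedOrientation G) {e₀ : E} {u v : V} (he : G.ends e₀ = s(u, v)) :
    potential M' M'' v - potential M' M'' u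
      = expo (M''.orient e₀) u - expo (M'.orient e₀) u := by
  classical
  have huv : u ≠ v := fun h' => G.loopless e₀ (by rw [he, h']; simp)
  rw [potential, potential, ← Finset.sum_sub_distrib, Finset.sum_eq_single e₀]
  · unfold contrib
    have hab : s(u, v) = s((endsP G e₀).1, (endsP G e₀).2) := he ▸ endsP_spec G e₀
    rcases Sym2.eq_iff.mp hab with ⟨h1, h2⟩ | ⟨h1, h2⟩
    · rw [← h1]
      rw [if_pos (show ReachIn G {e₀}ᶜ u u from Relation.ReflTransGen.refl),
        if_neg (separation hacyclic he)]
      ring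
    · rw [← h2]
      rw [if_pos (show ReachIn G {e₀}ᶜ v v from Relation.ReflTransGen.refl),
        if_neg (separation hacyclic (he.trans Sym2.eq_swap))]
      rw [expo_symm M' he huv, expo_symm M'' he huv]
      ring
  · intro e _ hne
    unfold contrib
    have hstep : ReachIn G {e}ᶜ u v :=
      Relation.ReflTransGen.single ⟨e₀, by simp [Ne.symm hne], he⟩
    by_cases hs : ReachIn G {e}ᶜ (endsP G e).1 v
    · rw [if_pos hs, if_pos (show ReachIn G {e}ᶜ (endsP G e).1 u from
        hs.trans (reachIn_symm hstep)), sub_self]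
    · rw [if_neg hs, if_neg (show ¬ ReachIn G {e}ᶜ (endsP G e).1 u from
        fun hs' => hs (hs'.trans hstep)), sub_self]
  · intro hmem
    exact absurd (Finset.mem_univ e₀) hmem

end Potential

/-- Lemma mtree: any two mixed trees with the same underlying tree are
related by a three-way switching. -/
theorem tree_switching [Fintype V] [Fintype E] {G : Multigraph V E}
    (hconn : G.Connected) (hacyclic : IsEmpty (MixedCycle G))
    (M' M'' : MixedOrientation G) :
    Switching M' M'' := by
  classical
  set d : V → ℂ := fun v => pw (potential M' M'' v) with hd
  refine ⟨d, fun v => ⟨(potential M' M'' v).val,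
    by have := ZMod.val_lt (potential M' M'' v); omega, rfl⟩, ?_⟩
  have hinvd : (Matrix.diagonal d)⁻¹ = Matrix.diagonal (fun v => (d v)⁻¹) := by
    apply Matrix.inv_eq_right_inv
    rw [Matrix.diagonal_mul_diagonal]
    ext i j
    rcases eq_or_ne i j with rfl | hij
    · simp [hd, mul_inv_cancel₀ (pw_ne_zero (potential M' M'' i))]
    · simp [Matrix.diagonal_apply_ne _ hij, Matrix.one_apply_ne hij]
  rw [hinvd]
  ext u v
  rw [Matrix.mul_diagonal, Matrix.diagonal_mul]
  simp only [herm, Matrix.of_apply]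
  rw [Finset.mul_sum, Finset.sum_mul]
  refine Finset.sum_congr rfl fun e _ => ?_
  by_cases hends : G.ends e = s(u, v)
  · rw [if_pos hends, if_pos hends]
    rw [stepWeight_eq, stepWeight_eq, hd]
    simp only []
    rw [pw_inv, ← pw_add, ← pw_add]
    congr 1
    have hdiff := potential_diff hacyclic M' M'' hends
    linear_combination -hdiff
  · rw [if_neg hends, if_neg hends]
    ring

end
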